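/- In P = ℂ[a,b,c,d,e] with the bracket determined by the stated table, let κ = e² − abe − cd + (a²d + b²c)/2 (equal to H'² + 4E'F' for H' = e − ab/2, E' = d/2 − b²/4, F' = −c/2 + a²/4). Then a polynomial f ∈ P satisfies {f,g} = 0 for all g ∈ P if and only if f lies in the ℂ-subalgebra generated by κ; that is, the Poisson center of P is the polynomial algebra ℂ[κ]. -/

import Mathlib

open MvPolynomial

noncomputable section

/-- The variables a, b, c, d, e of P = ℂ[a,b,c,d,e] are `X 0, X 1, X 2, X 3, X 4`
in `MvPolynomial (Fin 5) ℂ`.  `brTable u v` is the table of brackets of generators: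
{a,b} = 2, {a,c} = 0, {a,d} = 2b, {a,e} = a, {b,c} = −2a, {b,d} = 0, {b,e} = −b,
{c,d} = 4e, {c,e} = 2c, {d,e} = −2d, extended antisymmetrically. -/
def brTable : Fin 5 → Fin 5 → MvPolynomial (Fin 5) ℂ :=
  ![![0,        2,        0,          2 * X 1,    X 0],
    ![-2,       0,        -(2 * X 0), 0,          -(X 1)],
    ![0,        2 * X 0,  0,          4 * X 4,    2 * X 2],
    ![-(2 * X 1), 0,      -(4 * X 4), 0,          -(2 * X 3)],
    ![-(X 0),   X 1,      -(2 * X 2), 2 * X 3,    0]]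

/-- The Poisson bracket on P = ℂ[a,b,c,d,e] determined by the table:
{f,g} = Σ_{u,v} {u,v}·(∂f/∂u)·(∂g/∂v). -/
def pb5 (f g : MvPolynomial (Fin 5) ℂ) : MvPolynomial (Fin 5) ℂ :=
  ∑ u : Fin 5, ∑ v : Fin 5, brTable u v * pderiv u f * pderiv v g

/-- H' = e − ab/2. -/
def H' : MvPolynomial (Fin 5) ℂ := X 4 - C (1 / 2 : ℂ) * (X 0 * X 1)

/-- E' = d/2 − b²/4. -/
def E' : MvPolynomial (Fin 5) ℂ := C (1 / 2 : ℂ) * X 3 - C (1 / 4 : ℂ) * X 1 ^ 2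

/-- F' = −c/2 + a²/4. -/
def F' : MvPolynomial (Fin 5) ℂ := -(C (1 / 2 : ℂ) * X 2) + C (1 / 4 : ℂ) * X 0 ^ 2

/-- κ = e² − abe − cd + (a²d + b²c)/2 (which equals H'² + 4E'F'). -/
def kappa : MvPolynomial (Fin 5) ℂ :=
  X 4 ^ 2 - X 0 * X 1 * X 4 - X 2 * X 3 +
    C (1 / 2 : ℂ) * (X 0 ^ 2 * X 3 + X 1 ^ 2 * X 2)

lemma aux_half {σ : Type*} : (C (1/2 : ℂ) : MvPolynomial σ ℂ) * 2 = 1 := by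
  rw [show ((2 : MvPolynomial σ ℂ)) = C (2:ℂ) from (map_ofNat C 2).symm, ← C_mul]
  norm_num

lemma aux_pderiv_two_mul {n : ℕ} (i : Fin n) (p : MvPolynomial (Fin n) ℂ) :
    pderiv i (2 * p) = 2 * pderiv i p := by
  rw [show ((2 : MvPolynomial (Fin n) ℂ)) = C (2:ℂ) from (map_ofNat C 2).symm, pderiv_C_mul]

lemma aux_pderiv_two {n : ℕ} (i : Fin n) :
    pderiv i (2 : MvPolynomial (Fin n) ℂ) = 0 := by
  rw [show ((2 : MvPolynomial (Fin n) ℂ)) = C (2:ℂ) from (map_ofNat C 2).symm, pderiv_C]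

lemma aux_pderiv_aeval {n m : ℕ} (v : Fin n → MvPolynomial (Fin m) ℂ)
    (p : MvPolynomial (Fin n) ℂ) (i : Fin m) :
    pderiv i (aeval v p) = ∑ j, aeval v (pderiv j p) * pderiv i (v j) := by
  induction p using MvPolynomial.induction_on with
  | C a => simp
  | add p q hp hq => simp only [map_add, hp, hq, add_mul, Finset.sum_add_distrib]
  | mul_X p j hp =>
    have key : ∀ k : Fin n, aeval v (pderiv k (p * X j)) * pderiv i (v k)
        = aeval v (pderiv k p) * pderiv i (v k) * v j
          + (if k = j then aeval v p * pderiv i (v k) else 0) := by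
      intro k
      rcases eq_or_ne k j with rfl | hkj
      · simp only [pderiv_mul, pderiv_X_self, mul_one, map_add, map_mul, aeval_X, if_true]
        ring
      · simp only [pderiv_mul, pderiv_X_of_ne (Ne.symm hkj), mul_zero, add_zero, map_mul,
          aeval_X, if_neg hkj]
        ring
    calc pderiv i (aeval v (p * X j))
        = pderiv i (aeval v p) * v j + aeval v p * pderiv i (v j) := by
          rw [map_mul, aeval_X, pderiv_mul]
      _ = ∑ k, aeval v (pderiv k (p * X j)) * pderiv i (v k) := by
          rw [hp, Finset.sum_congr rfl fun k _ => key k, Finset.sum_add_distrib,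
            Finset.sum_ite_eq' Finset.univ j, if_pos (Finset.mem_univ j), Finset.sum_mul]

lemma aux_aeval_aeval {n m : ℕ} {v : Fin n → MvPolynomial (Fin m) ℂ}
    {w : Fin m → MvPolynomial (Fin n) ℂ}
    (h : ∀ i, aeval w (v i) = X i) (p : MvPolynomial (Fin n) ℂ) :
    aeval w (aeval v p) = p := by
  have h2 : (aeval w).comp (aeval v) = AlgHom.id ℂ (MvPolynomial (Fin n) ℂ) :=
    MvPolynomial.algHom_ext fun i => by
      simp only [AlgHom.comp_apply, aeval_X, AlgHom.id_apply]; exact h i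
  have h3 := AlgHom.congr_fun h2 p
  rw [AlgHom.comp_apply] at h3
  exact h3.trans rfl

lemma aux_aeval_inj {n m : ℕ} {v : Fin n → MvPolynomial (Fin m) ℂ}
    {w : Fin m → MvPolynomial (Fin n) ℂ}
    (h : ∀ i, aeval w (v i) = X i) {p q : MvPolynomial (Fin n) ℂ}
    (hpq : aeval v p = aeval v q) : p = q := by
  rw [← aux_aeval_aeval h p, hpq, aux_aeval_aeval h q]

lemma aux_coeff_pderiv {n : ℕ} (i : Fin n) (f : MvPolynomial (Fin n) ℂ) (m : Fin n →₀ ℕ) :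
    coeff m (pderiv i f) = ((m i : ℂ) + 1) * coeff (m + Finsupp.single i 1) f := by
  induction f using MvPolynomial.induction_on' with
  | add p q hp hq => simp [hp, hq, mul_add]
  | monomial s a =>
    rw [pderiv_monomial, coeff_monomial, coeff_monomial]
    by_cases h : s = m + Finsupp.single i 1
    · subst h
      rw [if_pos (by simp), if_pos rfl, Finsupp.add_apply, Finsupp.single_eq_same]
      push_cast
      ring
    · rw [if_neg h]
      by_cases h2 : s - Finsupp.single i 1 = m
      · rw [if_pos h2]
        have hsi : s i = 0 := by
          by_contra hsi
          apply h
          ext j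
          rcases eq_or_ne j i with rfl | hji
          · have h3 := DFunLike.congr_fun h2 j
            rw [Finsupp.tsub_apply, Finsupp.single_eq_same] at h3
            rw [Finsupp.add_apply, Finsupp.single_eq_same]
            omega
          · have h3 := DFunLike.congr_fun h2 j
            rw [Finsupp.tsub_apply, Finsupp.single_eq_of_ne hji] at h3
            rw [Finsupp.add_apply, Finsupp.single_eq_of_ne hji]
            omega
        rw [hsi]
        simp
      · rw [if_neg h2, mul_zero]

lemma aux_support_var {n : ℕ} {f : MvPolynomial (Fin n) ℂ} {i : Fin n}
    (h : pderiv i f = 0) {m : Fin n →₀ ℕ} (hm : m ∈ f.support) : m i = 0 := by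
  by_contra hmi
  have h1 : Finsupp.single i 1 ≤ m := by
    rw [Finsupp.single_le_iff]; omega
  have h2 := aux_coeff_pderiv i f (m - Finsupp.single i 1)
  rw [h, coeff_zero, tsub_add_cancel_of_le h1] at h2
  have hne : ((((m - Finsupp.single i 1 : Fin n →₀ ℕ)) i : ℂ) + 1) ≠ 0 :=
    Nat.cast_add_one_ne_zero _
  exact mem_support_iff.mp hm ((mul_eq_zero.mp h2.symm).resolve_left hne)

lemma aux_coeff_X_mul_pderiv {n : ℕ} (i : Fin n) (f : MvPolynomial (Fin n) ℂ) (m : Fin n →₀ ℕ) :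
    coeff m (X i * pderiv i f) = (m i : ℂ) * coeff m f := by
  classical
  rw [coeff_X_mul']
  by_cases h : i ∈ m.support
  · have hle : Finsupp.single i 1 ≤ m := by
      rw [Finsupp.single_le_iff]
      have := Finsupp.mem_support_iff.mp h
      omega
    rw [if_pos h, aux_coeff_pderiv, tsub_add_cancel_of_le hle]
    congr 1
    rw [Finsupp.tsub_apply, Finsupp.single_eq_same]
    have h2 : 1 ≤ m i := by
      have := Finsupp.mem_support_iff.mp h
      omega
    rw [Nat.cast_sub h2]
    push_cast
    ring
  · rw [if_neg h, Finsupp.notMem_support_iff.mp h]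
    simp

lemma aux_monomial_five (m : Fin 5 →₀ ℕ) (c : ℂ) :
    (monomial m c : MvPolynomial (Fin 5) ℂ)
      = C c * X 0 ^ m 0 * X 1 ^ m 1 * X 2 ^ m 2 * X 3 ^ m 3 * X 4 ^ m 4 := by
  rw [monomial_eq, Finsupp.prod_fintype _ _ fun i => pow_zero _, Fin.prod_univ_five]
  ring

lemma aux_monomial_two (m : Fin 2 →₀ ℕ) (c : ℂ) :
    (monomial m c : MvPolynomial (Fin 2) ℂ) = C c * X 0 ^ m 0 * X 1 ^ m 1 := by
  rw [monomial_eq, Finsupp.prod_fintype _ _ fun i => pow_zero _, Fin.prod_univ_two]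
  ring

lemma aux_repr5 {g : MvPolynomial (Fin 5) ℂ}
    (h0 : ∀ m ∈ g.support, m 0 = 0) (h1 : ∀ m ∈ g.support, m 1 = 0)
    (h23 : ∀ m ∈ g.support, m 2 = m 3) :
    aeval (![X 2 * X 3, X 4] : Fin 2 → MvPolynomial (Fin 5) ℂ)
      (∑ m ∈ g.support, C (coeff m g) * X 0 ^ m 2 * X 1 ^ m 4) = g := by
  rw [map_sum]
  conv_rhs => rw [g.as_sum]
  refine Finset.sum_congr rfl fun m hm => ?_
  rw [map_mul, map_mul, map_pow, map_pow, aeval_X, aeval_X, aeval_C, aux_monomial_five,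
    h0 m hm, h1 m hm, ← h23 m hm]
  simp only [Matrix.cons_val_zero, Matrix.cons_val_one, Matrix.head_cons, algebraMap_eq,
    pow_zero, mul_one, one_mul, mul_pow]
  ring

lemma aux_mem_adjoin_X0 {h : MvPolynomial (Fin 2) ℂ} (h1 : ∀ m ∈ h.support, m 1 = 0) :
    h ∈ Algebra.adjoin ℂ ({X 0} : Set (MvPolynomial (Fin 2) ℂ)) := by
  have hs : h = ∑ m ∈ h.support, monomial m (coeff m h) := h.as_sum
  rw [hs]
  apply Subalgebra.sum_mem
  intro m hm
  rw [aux_monomial_two, h1 m hm, pow_zero, mul_one]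
  exact mul_mem (by rw [← algebraMap_eq]; exact Subalgebra.algebraMap_mem _ _)
    (pow_mem (Algebra.subset_adjoin (Set.mem_singleton _)) _)

lemma aux_pb5_X (f : MvPolynomial (Fin 5) ℂ) (v : Fin 5) :
    pb5 f (X v) = ∑ u, brTable u v * pderiv u f := by
  unfold pb5
  refine Finset.sum_congr rfl fun u _ => ?_
  rw [Finset.sum_eq_single v]
  · rw [pderiv_X_self, mul_one]
  · intro v' _ hv'
    rw [pderiv_X_of_ne (Ne.symm hv'), mul_zero]
  · intro hv; exact absurd (Finset.mem_univ v) hv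

lemma aux_pb5_C (r : ℂ) (g : MvPolynomial (Fin 5) ℂ) : pb5 (C r) g = 0 := by
  simp [pb5, pderiv_C]

lemma aux_pb5_add (p q g : MvPolynomial (Fin 5) ℂ) :
    pb5 (p + q) g = pb5 p g + pb5 q g := by
  simp only [pb5, map_add, add_mul, mul_add, Finset.sum_add_distrib]

lemma aux_pb5_mul (p q g : MvPolynomial (Fin 5) ℂ) :
    pb5 (p * q) g = p * pb5 q g + q * pb5 p g := by
  simp only [pb5, pderiv_mul, Finset.mul_sum]
  rw [← Finset.sum_add_distrib]
  refine Finset.sum_congr rfl fun u _ => ?_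
  rw [← Finset.sum_add_distrib]
  refine Finset.sum_congr rfl fun v _ => ?_
  ring

lemma aux_pb5_kappa (g : MvPolynomial (Fin 5) ℂ) : pb5 kappa g = 0 := by
  have hu : (C (1/2 : ℂ) : MvPolynomial (Fin 5) ℂ) * 2 = 1 := aux_half
  have key : ∀ v : Fin 5, ∑ u, brTable u v * pderiv u kappa = 0 := by
    intro v
    fin_cases v <;>
      simp only [brTable, kappa, Fin.sum_univ_five, map_add, map_sub, pderiv_mul, pderiv_pow,
        pderiv_C_mul, pderiv_X, Pi.single_apply, pderiv_C,
        Matrix.cons_val_zero, Matrix.cons_val_one, Matrix.head_cons, Matrix.cons_val_two,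
        Matrix.cons_val_three, Matrix.cons_val_four, Matrix.tail_cons] <;>
      simp (config := { decide := true }) only [ite_true, ite_false, reduceIte] <;>
      norm_num
    · linear_combination (-(2 * X 1 * X 2) - X 0 ^ 2 * X 1) * hu
    · linear_combination (2 * X 0 * X 3 + X 0 * X 1 ^ 2) * hu
    · linear_combination (-(2 * X 0 * X 1 * X 2) - 2 * X 0 ^ 2 * X 4) * hu
    · linear_combination (2 * X 1 ^ 2 * X 4 + 2 * X 0 * X 1 * X 3) * hu
    · linear_combination (0 : MvPolynomial (Fin 5) ℂ) * hu
  unfold pb5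
  rw [Finset.sum_comm]
  refine Finset.sum_eq_zero fun v _ => ?_
  rw [← Finset.sum_mul, key v, zero_mul]

def sigv : Fin 5 → MvPolynomial (Fin 5) ℂ :=
  ![X 0, X 1, 2 * X 2 - X 0 ^ 2, 2 * X 3 - X 1 ^ 2, 2 * X 4 - X 0 * X 1]

def tauv : Fin 5 → MvPolynomial (Fin 5) ℂ :=
  ![X 0, X 1, C (1/2 : ℂ) * (X 2 + X 0 ^ 2), C (1/2 : ℂ) * (X 3 + X 1 ^ 2),
    C (1/2 : ℂ) * (X 4 + X 0 * X 1)]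

lemma aux_tau_sig : ∀ i, aeval tauv (sigv i) = X i := by
  have hu : (C (1/2 : ℂ) : MvPolynomial (Fin 5) ℂ) * 2 = 1 := aux_half
  have hsimp : ∀ k : Fin 5, aeval tauv (sigv k) = aeval tauv (sigv k) := fun _ => rfl
  have h0 : aeval tauv (sigv 0) = X 0 := by simp [sigv, tauv]
  have h1 : aeval tauv (sigv 1) = X 1 := by simp [sigv, tauv]
  have h2 : aeval tauv (sigv 2) = X 2 := by
    simp only [sigv, tauv, Matrix.cons_val_zero, Matrix.cons_val_one, Matrix.head_cons,
      Matrix.cons_val_two, Matrix.cons_val_three, Matrix.cons_val_four, Matrix.tail_cons,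
      map_sub, map_add, map_mul, map_pow, map_ofNat, aeval_X, aeval_C, algebraMap_eq]
    linear_combination (X 2 + X 0 ^ 2) * hu
  have h3 : aeval tauv (sigv 3) = X 3 := by
    simp only [sigv, tauv, Matrix.cons_val_zero, Matrix.cons_val_one, Matrix.head_cons,
      Matrix.cons_val_two, Matrix.cons_val_three, Matrix.cons_val_four, Matrix.tail_cons,
      map_sub, map_add, map_mul, map_pow, map_ofNat, aeval_X, aeval_C, algebraMap_eq]
    linear_combination (X 3 + X 1 ^ 2) * hu
  have h4 : aeval tauv (sigv 4) = X 4 := by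
    simp only [sigv, tauv, Matrix.cons_val_zero, Matrix.cons_val_one, Matrix.head_cons,
      Matrix.cons_val_two, Matrix.cons_val_three, Matrix.cons_val_four, Matrix.tail_cons,
      map_sub, map_add, map_mul, map_pow, map_ofNat, aeval_X, aeval_C, algebraMap_eq]
    linear_combination (X 4 + X 0 * X 1) * hu
  intro i
  fin_cases i
  · exact h0
  · exact h1
  · exact h2
  · exact h3
  · exact h4

lemma aux_sig_tau : ∀ i, aeval sigv (tauv i) = X i := by
  have hu : (C (1/2 : ℂ) : MvPolynomial (Fin 5) ℂ) * 2 = 1 := aux_half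
  have h0 : aeval sigv (tauv 0) = X 0 := by simp [sigv, tauv]
  have h1 : aeval sigv (tauv 1) = X 1 := by simp [sigv, tauv]
  have h2 : aeval sigv (tauv 2) = X 2 := by
    simp only [sigv, tauv, Matrix.cons_val_zero, Matrix.cons_val_one, Matrix.head_cons,
      Matrix.cons_val_two, Matrix.cons_val_three, Matrix.cons_val_four, Matrix.tail_cons,
      map_sub, map_add, map_mul, map_pow, map_ofNat, aeval_X, aeval_C, algebraMap_eq]
    linear_combination X 2 * hu
  have h3 : aeval sigv (tauv 3) = X 3 := by
    simp only [sigv, tauv, Matrix.cons_val_zero, Matrix.cons_val_one, Matrix.head_cons,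
      Matrix.cons_val_two, Matrix.cons_val_three, Matrix.cons_val_four, Matrix.tail_cons,
      map_sub, map_add, map_mul, map_pow, map_ofNat, aeval_X, aeval_C, algebraMap_eq]
    linear_combination X 3 * hu
  have h4 : aeval sigv (tauv 4) = X 4 := by
    simp only [sigv, tauv, Matrix.cons_val_zero, Matrix.cons_val_one, Matrix.head_cons,
      Matrix.cons_val_two, Matrix.cons_val_three, Matrix.cons_val_four, Matrix.tail_cons,
      map_sub, map_add, map_mul, map_pow, map_ofNat, aeval_X, aeval_C, algebraMap_eq]
    linear_combination X 4 * hu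
  intro i
  fin_cases i
  · exact h0
  · exact h1
  · exact h2
  · exact h3
  · exact h4

lemma aux_av_av : ∀ i : Fin 2,
    aeval (![X 1 ^ 2 - X 0, X 1] : Fin 2 → MvPolynomial (Fin 2) ℂ)
      ((![X 1 ^ 2 - X 0, X 1] : Fin 2 → MvPolynomial (Fin 2) ℂ) i) = X i := by
  have h0 : aeval (![X 1 ^ 2 - X 0, X 1] : Fin 2 → MvPolynomial (Fin 2) ℂ)
      ((![X 1 ^ 2 - X 0, X 1] : Fin 2 → MvPolynomial (Fin 2) ℂ) 0) = X 0 := by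
    simp only [Matrix.cons_val_zero, Matrix.cons_val_one, Matrix.head_cons, map_sub, map_pow,
      aeval_X]
    ring
  have h1 : aeval (![X 1 ^ 2 - X 0, X 1] : Fin 2 → MvPolynomial (Fin 2) ℂ)
      ((![X 1 ^ 2 - X 0, X 1] : Fin 2 → MvPolynomial (Fin 2) ℂ) 1) = X 1 := by
    simp only [Matrix.cons_val_zero, Matrix.cons_val_one, Matrix.head_cons, aeval_X]
  intro i
  fin_cases i
  · exact h0
  · exact h1

lemma aux_tau2_ev2 : ∀ i : Fin 2,
    aeval (![0, 0, X 0, 1, X 1] : Fin 5 → MvPolynomial (Fin 2) ℂ)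
      ((![X 2 * X 3, X 4] : Fin 2 → MvPolynomial (Fin 5) ℂ) i) = X i := by
  have h0 : aeval (![0, 0, X 0, 1, X 1] : Fin 5 → MvPolynomial (Fin 2) ℂ)
      ((![X 2 * X 3, X 4] : Fin 2 → MvPolynomial (Fin 5) ℂ) 0) = X 0 := by
    simp only [Matrix.cons_val_zero, Matrix.cons_val_one, Matrix.head_cons, Matrix.cons_val_two,
      Matrix.cons_val_three, Matrix.cons_val_four, Matrix.tail_cons, map_mul, aeval_X, mul_one]
  have h1 : aeval (![0, 0, X 0, 1, X 1] : Fin 5 → MvPolynomial (Fin 2) ℂ)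
      ((![X 2 * X 3, X 4] : Fin 2 → MvPolynomial (Fin 5) ℂ) 1) = X 1 := by
    simp only [Matrix.cons_val_zero, Matrix.cons_val_one, Matrix.head_cons, Matrix.cons_val_two,
      Matrix.cons_val_three, Matrix.cons_val_four, Matrix.tail_cons, map_mul, aeval_X, mul_one]
  intro i
  fin_cases i
  · exact h0
  · exact h1

lemma hsg0 : sigv 0 = X 0 := by
  simp [sigv]

lemma hsg1 : sigv 1 = X 1 := by
  simp [sigv]

lemma hsg2 : sigv 2 = 2 * X 2 - X 0 ^ 2 := by
  simp [sigv]

lemma hsg3 : sigv 3 = 2 * X 3 - X 1 ^ 2 := by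
  simp [sigv]

lemma hsg4 : sigv 4 = 2 * X 4 - X 0 * X 1 := by
  simp [sigv]

lemma hp00 : pderiv (0 : Fin 5) (sigv 0) = 1 := by
  rw [hsg0]
  simp only [map_sub, aux_pderiv_two_mul, pderiv_pow, pderiv_mul, pderiv_X, aux_pderiv_two,
    Pi.single_apply]
  simp (config := { decide := true })

lemma hp01 : pderiv (0 : Fin 5) (sigv 1) = 0 := by
  rw [hsg1]
  simp only [map_sub, aux_pderiv_two_mul, pderiv_pow, pderiv_mul, pderiv_X, aux_pderiv_two,
    Pi.single_apply]
  simp (config := { decide := true })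

lemma hp02 : pderiv (0 : Fin 5) (sigv 2) = -(2 * X 0) := by
  rw [hsg2]
  simp only [map_sub, aux_pderiv_two_mul, pderiv_pow, pderiv_mul, pderiv_X, aux_pderiv_two,
    Pi.single_apply]
  simp (config := { decide := true })

lemma hp03 : pderiv (0 : Fin 5) (sigv 3) = 0 := by
  rw [hsg3]
  simp only [map_sub, aux_pderiv_two_mul, pderiv_pow, pderiv_mul, pderiv_X, aux_pderiv_two,
    Pi.single_apply]
  simp (config := { decide := true })

lemma hp04 : pderiv (0 : Fin 5) (sigv 4) = -(X 1) := by
  rw [hsg4]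
  simp only [map_sub, aux_pderiv_two_mul, pderiv_pow, pderiv_mul, pderiv_X, aux_pderiv_two,
    Pi.single_apply]
  simp (config := { decide := true })

lemma hp10 : pderiv (1 : Fin 5) (sigv 0) = 0 := by
  rw [hsg0]
  simp only [map_sub, aux_pderiv_two_mul, pderiv_pow, pderiv_mul, pderiv_X, aux_pderiv_two,
    Pi.single_apply]
  simp (config := { decide := true })

lemma hp11 : pderiv (1 : Fin 5) (sigv 1) = 1 := by
  rw [hsg1]
  simp only [map_sub, aux_pderiv_two_mul, pderiv_pow, pderiv_mul, pderiv_X, aux_pderiv_two,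
    Pi.single_apply]
  simp (config := { decide := true })

lemma hp12 : pderiv (1 : Fin 5) (sigv 2) = 0 := by
  rw [hsg2]
  simp only [map_sub, aux_pderiv_two_mul, pderiv_pow, pderiv_mul, pderiv_X, aux_pderiv_two,
    Pi.single_apply]
  simp (config := { decide := true })

lemma hp13 : pderiv (1 : Fin 5) (sigv 3) = -(2 * X 1) := by
  rw [hsg3]
  simp only [map_sub, aux_pderiv_two_mul, pderiv_pow, pderiv_mul, pderiv_X, aux_pderiv_two,
    Pi.single_apply]
  simp (config := { decide := true })

lemma hp14 : pderiv (1 : Fin 5) (sigv 4) = -(X 0) := by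
  rw [hsg4]
  simp only [map_sub, aux_pderiv_two_mul, pderiv_pow, pderiv_mul, pderiv_X, aux_pderiv_two,
    Pi.single_apply]
  simp (config := { decide := true })

lemma hp20 : pderiv (2 : Fin 5) (sigv 0) = 0 := by
  rw [hsg0]
  simp only [map_sub, aux_pderiv_two_mul, pderiv_pow, pderiv_mul, pderiv_X, aux_pderiv_two,
    Pi.single_apply]
  simp (config := { decide := true })

lemma hp21 : pderiv (2 : Fin 5) (sigv 1) = 0 := by
  rw [hsg1]
  simp only [map_sub, aux_pderiv_two_mul, pderiv_pow, pderiv_mul, pderiv_X, aux_pderiv_two,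
    Pi.single_apply]
  simp (config := { decide := true })

lemma hp22 : pderiv (2 : Fin 5) (sigv 2) = 2 := by
  rw [hsg2]
  simp only [map_sub, aux_pderiv_two_mul, pderiv_pow, pderiv_mul, pderiv_X, aux_pderiv_two,
    Pi.single_apply]
  simp (config := { decide := true })

lemma hp23 : pderiv (2 : Fin 5) (sigv 3) = 0 := by
  rw [hsg3]
  simp only [map_sub, aux_pderiv_two_mul, pderiv_pow, pderiv_mul, pderiv_X, aux_pderiv_two,
    Pi.single_apply]
  simp (config := { decide := true })

lemma hp24 : pderiv (2 : Fin 5) (sigv 4) = 0 := by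
  rw [hsg4]
  simp only [map_sub, aux_pderiv_two_mul, pderiv_pow, pderiv_mul, pderiv_X, aux_pderiv_two,
    Pi.single_apply]
  simp (config := { decide := true })

lemma hp30 : pderiv (3 : Fin 5) (sigv 0) = 0 := by
  rw [hsg0]
  simp only [map_sub, aux_pderiv_two_mul, pderiv_pow, pderiv_mul, pderiv_X, aux_pderiv_two,
    Pi.single_apply]
  simp (config := { decide := true })

lemma hp31 : pderiv (3 : Fin 5) (sigv 1) = 0 := by
  rw [hsg1]
  simp only [map_sub, aux_pderiv_two_mul, pderiv_pow, pderiv_mul, pderiv_X, aux_pderiv_two,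
    Pi.single_apply]
  simp (config := { decide := true })

lemma hp32 : pderiv (3 : Fin 5) (sigv 2) = 0 := by
  rw [hsg2]
  simp only [map_sub, aux_pderiv_two_mul, pderiv_pow, pderiv_mul, pderiv_X, aux_pderiv_two,
    Pi.single_apply]
  simp (config := { decide := true })

lemma hp33 : pderiv (3 : Fin 5) (sigv 3) = 2 := by
  rw [hsg3]
  simp only [map_sub, aux_pderiv_two_mul, pderiv_pow, pderiv_mul, pderiv_X, aux_pderiv_two,
    Pi.single_apply]
  simp (config := { decide := true })

lemma hp34 : pderiv (3 : Fin 5) (sigv 4) = 0 := by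
  rw [hsg4]
  simp only [map_sub, aux_pderiv_two_mul, pderiv_pow, pderiv_mul, pderiv_X, aux_pderiv_two,
    Pi.single_apply]
  simp (config := { decide := true })

lemma hp40 : pderiv (4 : Fin 5) (sigv 0) = 0 := by
  rw [hsg0]
  simp only [map_sub, aux_pderiv_two_mul, pderiv_pow, pderiv_mul, pderiv_X, aux_pderiv_two,
    Pi.single_apply]
  simp (config := { decide := true })

lemma hp41 : pderiv (4 : Fin 5) (sigv 1) = 0 := by
  rw [hsg1]
  simp only [map_sub, aux_pderiv_two_mul, pderiv_pow, pderiv_mul, pderiv_X, aux_pderiv_two,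
    Pi.single_apply]
  simp (config := { decide := true })

lemma hp42 : pderiv (4 : Fin 5) (sigv 2) = 0 := by
  rw [hsg2]
  simp only [map_sub, aux_pderiv_two_mul, pderiv_pow, pderiv_mul, pderiv_X, aux_pderiv_two,
    Pi.single_apply]
  simp (config := { decide := true })

lemma hp43 : pderiv (4 : Fin 5) (sigv 3) = 0 := by
  rw [hsg3]
  simp only [map_sub, aux_pderiv_two_mul, pderiv_pow, pderiv_mul, pderiv_X, aux_pderiv_two,
    Pi.single_apply]
  simp (config := { decide := true })

lemma hp44 : pderiv (4 : Fin 5) (sigv 4) = 2 := by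
  rw [hsg4]
  simp only [map_sub, aux_pderiv_two_mul, pderiv_pow, pderiv_mul, pderiv_X, aux_pderiv_two,
    Pi.single_apply]
  simp (config := { decide := true })


/-!
STATEMENT 19: a polynomial f ∈ P = ℂ[a,b,c,d,e] satisfies {f,g} = 0 for all g ∈ P
if and only if f lies in the ℂ-subalgebra generated by κ; i.e. the Poisson center
of P is the polynomial algebra ℂ[κ].
-/
theorem stmt_19 (f : MvPolynomial (Fin 5) ℂ) :
    (∀ g : MvPolynomial (Fin 5) ℂ, pb5 f g = 0) ↔
      f ∈ Algebra.adjoin ℂ ({kappa} : Set (MvPolynomial (Fin 5) ℂ)) := by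
  constructor
  · intro hyp
    have hu : (C (1/2 : ℂ) : MvPolynomial (Fin 5) ℂ) * 2 = 1 := aux_half
    have h2z : (2 : MvPolynomial (Fin 5) ℂ) ≠ 0 := by
      rw [show ((2 : MvPolynomial (Fin 5) ℂ)) = C (2:ℂ) from (map_ofNat C 2).symm, C_ne_zero]
      norm_num
    have Ea : ∑ u, brTable u 0 * pderiv u f = 0 := by rw [← aux_pb5_X]; exact hyp (X 0)
    have Eb : ∑ u, brTable u 1 * pderiv u f = 0 := by rw [← aux_pb5_X]; exact hyp (X 1)
    have Ec : ∑ u, brTable u 2 * pderiv u f = 0 := by rw [← aux_pb5_X]; exact hyp (X 2)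
    have Ed : ∑ u, brTable u 3 * pderiv u f = 0 := by rw [← aux_pb5_X]; exact hyp (X 3)
    have Ee : ∑ u, brTable u 4 * pderiv u f = 0 := by rw [← aux_pb5_X]; exact hyp (X 4)
    simp only [Fin.sum_univ_five, brTable, Matrix.cons_val_zero, Matrix.cons_val_one,
      Matrix.head_cons, Matrix.cons_val_two, Matrix.cons_val_three, Matrix.cons_val_four,
      Matrix.tail_cons] at Ea Eb Ec Ed Ee
    set g : MvPolynomial (Fin 5) ℂ := aeval tauv f with hgdef
    have hfg : f = aeval sigv g := (aux_aeval_aeval aux_sig_tau f).symm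
    have hinj : ∀ p q : MvPolynomial (Fin 5) ℂ,
        aeval sigv p = aeval sigv q → p = q := fun p q => aux_aeval_inj aux_tau_sig
    have hchain : ∀ i, pderiv i f = ∑ j, aeval sigv (pderiv j g) * pderiv i (sigv j) := by
      intro i
      conv_lhs => rw [hfg]
      exact aux_pderiv_aeval sigv g i
    simp only [hchain, Fin.sum_univ_five, hp00, hp01, hp02, hp03, hp04, hp10, hp11, hp12,
      hp13, hp14, hp20, hp21, hp22, hp23, hp24, hp30, hp31, hp32, hp33, hp34, hp40, hp41,
      hp42, hp43, hp44] at Ea Eb Ec Ed Ee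
    -- the basic relations satisfied by g
    have hG1 : aeval sigv (pderiv 1 g) = 0 := by
      have hd : (2 : MvPolynomial (Fin 5) ℂ) * aeval sigv (pderiv 1 g) = 2 * 0 := by
        linear_combination -Ea
      exact mul_left_cancel₀ h2z hd
    have hG0 : aeval sigv (pderiv 0 g) = 0 := by
      have hd : (2 : MvPolynomial (Fin 5) ℂ) * aeval sigv (pderiv 0 g) = 2 * 0 := by
        linear_combination Eb
      exact mul_left_cancel₀ h2z hd
    have hpd0 : pderiv 0 g = 0 := hinj _ _ (by rw [map_zero]; exact hG0)
    have hpd1 : pderiv 1 g = 0 := hinj _ _ (by rw [map_zero]; exact hG1)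
    have e5 : X 2 * pderiv 2 g = X 3 * pderiv 3 g := by
      refine mul_left_cancel₀ h2z (hinj _ _ ?_)
      simp only [map_mul, map_ofNat, aeval_X, hsg2, hsg3]
      linear_combination Ee - X 0 * hG0 + X 1 * hG1
    have e4 : 2 * (X 4 * pderiv 2 g) + X 3 * pderiv 4 g = 0 := by
      refine mul_left_cancel₀ h2z (hinj _ _ ?_)
      simp only [map_add, map_mul, map_ofNat, aeval_X, hsg2, hsg3, hsg4, map_zero, mul_zero]
      linear_combination Ed - 2 * X 1 * hG0
    -- pass to the subalgebra generated by X2*X3 and X4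
    have hs0 : ∀ m ∈ g.support, m 0 = 0 := fun m hm => aux_support_var hpd0 hm
    have hs1 : ∀ m ∈ g.support, m 1 = 0 := fun m hm => aux_support_var hpd1 hm
    have hs23 : ∀ m ∈ g.support, m 2 = m 3 := by
      intro m hm
      have hc := congrArg (coeff m) e5
      rw [aux_coeff_X_mul_pderiv, aux_coeff_X_mul_pderiv] at hc
      have hne := mem_support_iff.mp hm
      have : ((m 2 : ℂ)) = m 3 := mul_right_cancel₀ hne hc
      exact_mod_cast this
    set g2 : MvPolynomial (Fin 2) ℂ :=
      ∑ m ∈ g.support, C (coeff m g) * X 0 ^ m 2 * X 1 ^ m 4 with hg2def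
    have hg2 : aeval (![X 2 * X 3, X 4] : Fin 2 → MvPolynomial (Fin 5) ℂ) g2 = g :=
      aux_repr5 hs0 hs1 hs23
    have hchain2 : ∀ i, pderiv i g = ∑ j : Fin 2,
        aeval (![X 2 * X 3, X 4] : Fin 2 → MvPolynomial (Fin 5) ℂ) (pderiv j g2) *
          pderiv i ((![X 2 * X 3, X 4] : Fin 2 → MvPolynomial (Fin 5) ℂ) j) := by
      intro i
      conv_lhs => rw [← hg2]
      exact aux_pderiv_aeval _ g2 i
    have hq0 : ((![X 2 * X 3, X 4] : Fin 2 → MvPolynomial (Fin 5) ℂ) 0) = X 2 * X 3 := rfl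
    have hq1 : ((![X 2 * X 3, X 4] : Fin 2 → MvPolynomial (Fin 5) ℂ) 1) = X 4 := rfl
    have hd2q0 : pderiv (2 : Fin 5) (X 2 * X 3 : MvPolynomial (Fin 5) ℂ) = X 3 := by
      simp only [pderiv_mul, pderiv_X, Pi.single_apply]
      simp (config := { decide := true })
    have hd4q0 : pderiv (4 : Fin 5) (X 2 * X 3 : MvPolynomial (Fin 5) ℂ) = 0 := by
      simp only [pderiv_mul, pderiv_X, Pi.single_apply]
      simp (config := { decide := true })
    have hd2q1 : pderiv (2 : Fin 5) (X 4 : MvPolynomial (Fin 5) ℂ) = 0 := by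
      simp only [pderiv_X, Pi.single_apply]
      simp (config := { decide := true })
    have hd4q1 : pderiv (4 : Fin 5) (X 4 : MvPolynomial (Fin 5) ℂ) = 1 := pderiv_X_self 4
    rw [hchain2 2, hchain2 4] at e4
    simp only [Fin.sum_univ_two, hq0, hq1, hd2q0, hd4q0, hd2q1, hd4q1, mul_zero, zero_mul,
      add_zero, zero_add, mul_one] at e4
    have e4' : 2 * (X 4 * aeval (![X 2 * X 3, X 4] : Fin 2 → MvPolynomial (Fin 5) ℂ)
        (pderiv 0 g2)) + aeval (![X 2 * X 3, X 4] : Fin 2 → MvPolynomial (Fin 5) ℂ)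
        (pderiv 1 g2) = 0 := by
      refine mul_left_cancel₀ (X_ne_zero (3 : Fin 5)) ?_
      rw [mul_zero]
      linear_combination e4
    have hinj2 : ∀ p q : MvPolynomial (Fin 2) ℂ,
        aeval (![X 2 * X 3, X 4] : Fin 2 → MvPolynomial (Fin 5) ℂ) p =
          aeval (![X 2 * X 3, X 4] : Fin 2 → MvPolynomial (Fin 5) ℂ) q → p = q :=
      fun p q => aux_aeval_inj aux_tau2_ev2
    have hg2e : 2 * (X 1 * pderiv 0 g2) + pderiv 1 g2 = 0 := by
      apply hinj2
      simp only [map_add, map_mul, map_ofNat, aeval_X, map_zero, hq1]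
      linear_combination e4'
    -- substitute X0 ↦ X1^2 - X0
    set p3 : MvPolynomial (Fin 2) ℂ :=
      aeval (![X 1 ^ 2 - X 0, X 1] : Fin 2 → MvPolynomial (Fin 2) ℂ) g2 with hp3def
    have hg2h : aeval (![X 1 ^ 2 - X 0, X 1] : Fin 2 → MvPolynomial (Fin 2) ℂ) p3 = g2 :=
      aux_aeval_aeval aux_av_av g2
    have hchain3 : ∀ i, pderiv i g2 = ∑ j : Fin 2,
        aeval (![X 1 ^ 2 - X 0, X 1] : Fin 2 → MvPolynomial (Fin 2) ℂ) (pderiv j p3) *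
          pderiv i ((![X 1 ^ 2 - X 0, X 1] : Fin 2 → MvPolynomial (Fin 2) ℂ) j) := by
      intro i
      conv_lhs => rw [← hg2h]
      exact aux_pderiv_aeval _ p3 i
    have hr0 : ((![X 1 ^ 2 - X 0, X 1] : Fin 2 → MvPolynomial (Fin 2) ℂ) 0)
        = X 1 ^ 2 - X 0 := rfl
    have hr1 : ((![X 1 ^ 2 - X 0, X 1] : Fin 2 → MvPolynomial (Fin 2) ℂ) 1) = X 1 := rfl
    have hd0r0 : pderiv (0 : Fin 2) (X 1 ^ 2 - X 0 : MvPolynomial (Fin 2) ℂ) = -1 := by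
      simp only [map_sub, pderiv_pow, pderiv_X, Pi.single_apply]
      simp (config := { decide := true })
    have hd1r0 : pderiv (1 : Fin 2) (X 1 ^ 2 - X 0 : MvPolynomial (Fin 2) ℂ) = 2 * X 1 := by
      simp only [map_sub, pderiv_pow, pderiv_X, Pi.single_apply]
      simp (config := { decide := true })
      try ring
    have hd0r1 : pderiv (0 : Fin 2) (X 1 : MvPolynomial (Fin 2) ℂ) = 0 := by
      simp (config := { decide := true }) [pderiv_X, Pi.single_apply]
    have hd1r1 : pderiv (1 : Fin 2) (X 1 : MvPolynomial (Fin 2) ℂ) = 1 := pderiv_X_self 1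
    rw [hchain3 0, hchain3 1] at hg2e
    simp only [Fin.sum_univ_two, hr0, hr1, hd0r0, hd1r0, hd0r1, hd1r1, mul_zero, zero_mul,
      add_zero, zero_add, mul_one, mul_neg_one] at hg2e
    have hB1 : aeval (![X 1 ^ 2 - X 0, X 1] : Fin 2 → MvPolynomial (Fin 2) ℂ)
        (pderiv 1 p3) = 0 := by
      linear_combination hg2e
    have hpd1p3 : pderiv 1 p3 = 0 :=
      aux_aeval_inj aux_av_av (q := 0) (by rw [map_zero]; exact hB1)
    have hmem : p3 ∈ Algebra.adjoin ℂ ({X 0} : Set (MvPolynomial (Fin 2) ℂ)) :=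
      aux_mem_adjoin_X0 (fun m hm => aux_support_var hpd1p3 hm)
    -- conclude
    set Psi : MvPolynomial (Fin 2) ℂ →ₐ[ℂ] MvPolynomial (Fin 5) ℂ :=
      (aeval sigv).comp ((aeval (![X 2 * X 3, X 4] : Fin 2 → MvPolynomial (Fin 5) ℂ)).comp
        (aeval (![X 1 ^ 2 - X 0, X 1] : Fin 2 → MvPolynomial (Fin 2) ℂ))) with hPsidef
    have hfh : f = Psi p3 := by
      rw [hPsidef, AlgHom.comp_apply, AlgHom.comp_apply, hg2h, hg2]
      exact hfg
    have hmem2 : Psi p3 ∈ (Algebra.adjoin ℂ ({X 0} : Set (MvPolynomial (Fin 2) ℂ))).map Psi :=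
      Subalgebra.mem_map.mpr ⟨p3, hmem, rfl⟩
    rw [AlgHom.map_adjoin_singleton] at hmem2
    have hpsix : Psi (X 0) = 4 * kappa := by
      rw [hPsidef, AlgHom.comp_apply, AlgHom.comp_apply, aeval_X, hr0]
      rw [map_sub, map_pow, aeval_X, aeval_X, hq0, hq1]
      rw [map_sub, map_pow, map_mul, aeval_X, aeval_X, aeval_X, hsg2, hsg3, hsg4]
      rw [kappa]
      linear_combination (-2 * (X 1 ^ 2 * X 2 + X 0 ^ 2 * X 3)) * hu
    rw [hpsix] at hmem2
    rw [← hfh] at hmem2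
    have hle : Algebra.adjoin ℂ ({4 * kappa} : Set (MvPolynomial (Fin 5) ℂ)) ≤
        Algebra.adjoin ℂ ({kappa} : Set (MvPolynomial (Fin 5) ℂ)) := by
      apply Algebra.adjoin_le
      intro x hx
      rw [Set.mem_singleton_iff] at hx
      subst hx
      refine mul_mem ?_ (Algebra.subset_adjoin (Set.mem_singleton _))
      rw [show ((4 : MvPolynomial (Fin 5) ℂ)) = algebraMap ℂ _ (4:ℂ) from
        (map_ofNat _ 4).symm]
      exact Subalgebra.algebraMap_mem _ _
    exact hle hmem2
  · intro hmem
    refine Algebra.adjoin_induction (fun x hx => ?_) (fun r => ?_) (fun x y _ _ hx hy => ?_)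
      (fun x y _ _ hx hy => ?_) hmem
    · rw [Set.mem_singleton_iff] at hx
      subst hx
      exact aux_pb5_kappa
    · intro g
      rw [algebraMap_eq]
      exact aux_pb5_C r g
    · intro g
      rw [aux_pb5_add, hx g, hy g, add_zero]
    · intro g
      rw [aux_pb5_mul, hx g, hy g, mul_zero, mul_zero, add_zero]
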